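/- arXiv:2112.10361 — 3 statements merged into one kernel-verified Lean document; each statement's English description precedes it below -/
import Mathlib

section
/- Suppose u ∈ H¹(ℝ) is smooth enough and m = u − u_{xx} ≥ 0 on ℝ. Then u ± u_x = 2 p_∓ * m ≥ 0 pointwise, and consequently |u_x(x)| ≤ u(x) for all x ∈ ℝ. -/
open MeasureTheory Real

/-- The kernel `p(x) = (1/2) e^{-|x|}`. -/
noncomputable def pker (x : ℝ) : ℝ := (1/2) * Real.exp (-|x|)

/-- `p_+ * f (x) = (1/2) e^{-x} ∫_{-∞}^{x} e^{y} f(y) dy`. -/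
noncomputable def pPlus (f : ℝ → ℝ) (x : ℝ) : ℝ :=
  (1/2) * Real.exp (-x) * ∫ y in Set.Iic x, Real.exp y * f y

/-- `p_- * f (x) = (1/2) e^{x} ∫_{-∞}^{-x} e^{y} f(-y) dy`. -/
noncomputable def pMinus (f : ℝ → ℝ) (x : ℝ) : ℝ :=
  (1/2) * Real.exp x * ∫ y in Set.Iic (-x), Real.exp y * f (-y)

private lemma hasDerivAt_integral_Iic (g : ℝ → ℝ) (hg : Continuous g)
    (hgi : ∀ a : ℝ, IntegrableOn g (Set.Iic a)) (x : ℝ) :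
    HasDerivAt (fun t => ∫ y in Set.Iic t, g y) (g x) x := by
  have key : ∀ t : ℝ, ∫ y in Set.Iic t, g y = (∫ y in Set.Iic 0, g y) + ∫ y in (0:ℝ)..t, g y := by
    intro t
    have := intervalIntegral.integral_Iic_sub_Iic (hgi 0) (hgi t)
    linarith
  have h := ((hg.integral_hasStrictDerivAt 0 x).hasDerivAt).const_add (∫ y in Set.Iic 0, g y)
  exact h.congr_of_eventuallyEq (by filter_upwards with t using (key t))

/-- If `u = p * m` is sufficiently smooth, `u ∈ H¹`, and `m = u - u_xx ≥ 0`, then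
`u + u_x = 2 p_- * m ≥ 0`, `u - u_x = 2 p_+ * m ≥ 0`, and hence `|u_x| ≤ u` pointwise. -/
theorem sign_preservation_estimates (u m : ℝ → ℝ)
    (hm : Integrable m) (hmpos : ∀ x, 0 ≤ m x)
    (hu : ∀ x, u x = ∫ y : ℝ, pker (x - y) * m y)
    (hH1u : MemLp u 2 (volume : Measure ℝ))
    (hH1ux : MemLp (deriv u) 2 (volume : Measure ℝ))
    (hsmooth : ContDiff ℝ 2 u)
    (hmdef : ∀ x, m x = u x - deriv (deriv u) x) :
    ∀ x : ℝ,
      u x + deriv u x = 2 * pMinus m x ∧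
      u x - deriv u x = 2 * pPlus m x ∧
      0 ≤ u x + deriv u x ∧
      0 ≤ u x - deriv u x ∧
      |deriv u x| ≤ u x := by
  -- continuity of m
  have hderiv1 : ContDiff ℝ 1 (deriv u) := by
    rw [show (2 : WithTop ℕ∞) = 1 + 1 from by norm_num] at hsmooth
    exact (contDiff_succ_iff_deriv.mp hsmooth).2.2
  have hcont_uxx : Continuous (deriv (deriv u)) := (contDiff_one_iff_deriv.mp hderiv1).2
  have hmc : Continuous m := by
    have hmeq : m = fun x => u x - deriv (deriv u) x := funext hmdef
    rw [hmeq]; exact hsmooth.continuous.sub hcont_uxx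
  have hmneg : Integrable (fun y => m (-y)) := hm.comp_neg
  -- integrability of the weighted integrands on half-lines
  have hgi : ∀ a : ℝ, IntegrableOn (fun y => Real.exp y * m y) (Set.Iic a) := by
    intro a
    refine Integrable.mono' (hm.restrict.const_mul (Real.exp a))
      ((Real.continuous_exp.mul hmc).aestronglyMeasurable) ?_
    filter_upwards [ae_restrict_mem measurableSet_Iic] with y hy
    rw [Real.norm_eq_abs, abs_of_nonneg (mul_nonneg (Real.exp_pos y).le (hmpos y))]
    exact mul_le_mul_of_nonneg_right (Real.exp_le_exp.mpr hy) (hmpos y)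
  have hgi' : ∀ a : ℝ, IntegrableOn (fun y => Real.exp y * m (-y)) (Set.Iic a) := by
    intro a
    refine Integrable.mono' (hmneg.restrict.const_mul (Real.exp a))
      ((Real.continuous_exp.mul (hmc.comp continuous_neg)).aestronglyMeasurable) ?_
    filter_upwards [ae_restrict_mem measurableSet_Iic] with y hy
    rw [Real.norm_eq_abs, abs_of_nonneg (mul_nonneg (Real.exp_pos y).le (hmpos (-y)))]
    exact mul_le_mul_of_nonneg_right (Real.exp_le_exp.mpr hy) (hmpos (-y))
  -- derivatives of pPlus m and pMinus m
  have hexp : ∀ x : ℝ, Real.exp (-x) * Real.exp x = 1 := by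
    intro x; rw [← Real.exp_add]; simp
  have hF : ∀ x : ℝ, HasDerivAt (fun t => ∫ y in Set.Iic t, Real.exp y * m y)
      (Real.exp x * m x) x :=
    hasDerivAt_integral_Iic _ (Real.continuous_exp.mul hmc) hgi
  have hG0 : ∀ x : ℝ, HasDerivAt (fun t => ∫ y in Set.Iic t, Real.exp y * m (-y))
      (Real.exp x * m (-x)) x :=
    hasDerivAt_integral_Iic _ (Real.continuous_exp.mul (hmc.comp continuous_neg)) hgi'
  have hG : ∀ x : ℝ, HasDerivAt (fun t => ∫ y in Set.Iic (-t), Real.exp y * m (-y))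
      (-(Real.exp (-x) * m x)) x := by
    intro x
    have := (hG0 (-x)).comp x (hasDerivAt_neg x)
    simpa [mul_comm, Function.comp_def] using this
  have hhalf : ∀ x : ℝ, HasDerivAt (fun t => (1/2 : ℝ) * Real.exp (-t))
      (-((1/2 : ℝ) * Real.exp (-x))) x := by
    intro x
    have := ((Real.hasDerivAt_exp (-x)).comp x (hasDerivAt_neg x)).const_mul (1/2 : ℝ)
    simpa [mul_comm] using this
  have hhalf' : ∀ x : ℝ, HasDerivAt (fun t => (1/2 : ℝ) * Real.exp t)
      ((1/2 : ℝ) * Real.exp x) x := by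
    intro x
    simpa using (Real.hasDerivAt_exp x).const_mul (1/2 : ℝ)
  have hPplus : ∀ x : ℝ, HasDerivAt (pPlus m) (-(pPlus m x) + (1/2) * m x) x := by
    intro x
    have h := (hhalf x).mul (hF x)
    unfold pPlus
    exact h.congr_deriv (by linear_combination (m x / 2) * hexp x)
  have hPminus : ∀ x : ℝ, HasDerivAt (pMinus m) (pMinus m x - (1/2) * m x) x := by
    intro x
    have h := (hhalf' x).mul (hG x)
    unfold pMinus
    exact h.congr_deriv (by linear_combination (-(m x) / 2) * hexp x)
  -- splitting of u into pPlus + pMinus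
  have hpkerc : Continuous pker := by
    unfold pker; exact continuous_const.mul (Real.continuous_exp.comp continuous_abs.neg)
  have husplit : ∀ x : ℝ, u x = pPlus m x + pMinus m x := by
    intro x
    have hintc : Continuous (fun y => pker (x - y) * m y) :=
      (hpkerc.comp (continuous_const.sub continuous_id)).mul hmc
    have hbound : ∀ s : Set ℝ, IntegrableOn (fun y => pker (x - y) * m y) s := by
      intro s
      refine Integrable.mono' (hm.restrict.const_mul (1/2))
        hintc.aestronglyMeasurable ?_
      filter_upwards with y
      have hp1 : pker (x - y) ≤ 1/2 := by
        unfold pker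
        have : Real.exp (-|x - y|) ≤ 1 := Real.exp_le_one_iff.mpr (neg_nonpos.mpr (abs_nonneg _))
        nlinarith
      have hp0 : 0 ≤ pker (x - y) := by
        unfold pker; positivity
      rw [Real.norm_eq_abs, abs_of_nonneg (mul_nonneg hp0 (hmpos y))]
      exact mul_le_mul_of_nonneg_right hp1 (hmpos y)
    rw [hu x, ← intervalIntegral.integral_Iic_add_Ioi (hbound (Set.Iic x)) (hbound (Set.Ioi x))]
    congr 1
    · unfold pPlus
      rw [← MeasureTheory.integral_const_mul]
      refine setIntegral_congr_fun measurableSet_Iic ?_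
      intro y hy
      simp only
      unfold pker
      rw [abs_of_nonneg (sub_nonneg.mpr hy), show -(x - y) = -x + y from by ring, Real.exp_add]
      ring
    · unfold pMinus
      rw [show (∫ y in Set.Iic (-x), Real.exp y * m (-y))
            = ∫ y in Set.Ioi x, Real.exp (-y) * m y from by
          have := integral_comp_neg_Iic (-x) (fun y => Real.exp (-y) * m y)
          simpa using this]
      rw [← MeasureTheory.integral_const_mul]
      refine setIntegral_congr_fun measurableSet_Ioi ?_
      intro y hy
      simp only
      unfold pker
      rw [abs_of_nonpos (sub_nonpos.mpr (le_of_lt hy)), show - -(x - y) = x + -y from by ring,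
        Real.exp_add]
      ring
  -- derivative of u
  have hudiff : ∀ x : ℝ, HasDerivAt u (pMinus m x - pPlus m x) x := by
    intro x
    have h := (hPplus x).add (hPminus x)
    have heq : (pPlus m + pMinus m) = u := funext fun t => (husplit t).symm
    rw [heq] at h
    exact h.congr_deriv (by ring)
  have hderiv_eq : ∀ x : ℝ, deriv u x = pMinus m x - pPlus m x := fun x => (hudiff x).deriv
  -- positivity
  have hPp0 : ∀ x : ℝ, 0 ≤ pPlus m x := by
    intro x
    unfold pPlus
    have : 0 ≤ ∫ y in Set.Iic x, Real.exp y * m y :=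
      setIntegral_nonneg measurableSet_Iic fun y _ => mul_nonneg (Real.exp_pos y).le (hmpos y)
    positivity
  have hPm0 : ∀ x : ℝ, 0 ≤ pMinus m x := by
    intro x
    unfold pMinus
    have : 0 ≤ ∫ y in Set.Iic (-x), Real.exp y * m (-y) :=
      setIntegral_nonneg measurableSet_Iic fun y _ => mul_nonneg (Real.exp_pos y).le (hmpos (-y))
    positivity
  intro x
  have e1 : u x + deriv u x = 2 * pMinus m x := by rw [hderiv_eq, husplit]; ring
  have e2 : u x - deriv u x = 2 * pPlus m x := by rw [hderiv_eq, husplit]; ring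
  refine ⟨e1, e2, ?_, ?_, ?_⟩
  · rw [e1]; linarith [hPm0 x]
  · rw [e2]; linarith [hPp0 x]
  · rw [abs_le]
    constructor <;> nlinarith [hPp0 x, hPm0 x, e1, e2]
end

section
/- Let p(x) = (1/2)e^{-|x|}. For any function u ∈ H¹(ℝ) and a.e. x, p * (u² + (1/2)u_x²)(x) ≥ (1/2)u(x)², and also p_± * (u² + (1/2)u_x²)(x) ≥ (1/4)u(x)². -/
open MeasureTheory Real

/-- Spatial convolution `(g * f)(x) = ∫ g(x-y) f(y) dy`. -/
noncomputable def conv (g f : ℝ → ℝ) (x : ℝ) : ℝ := ∫ y : ℝ, g (x - y) * f y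

open Filter Set


lemma sq_tendsto_zero_atBot (u : ℝ → ℝ) (hdiff : Differentiable ℝ u)
    (hu2 : Integrable (fun y => u y ^ 2) (volume : Measure ℝ))
    (h2 : Integrable (fun y => 2 * (u y * deriv u y)) (volume : Measure ℝ)) :
    Tendsto (fun a => u a ^ 2) atBot (nhds 0) := by
  have hftc : ∀ a : ℝ, ∫ y in a..(0:ℝ), 2 * (u y * deriv u y) = u 0 ^ 2 - u a ^ 2 := by
    intro a
    have hd : ∀ y ∈ uIcc a (0:ℝ), HasDerivAt (fun z => u z ^ 2) (2 * (u y * deriv u y)) y := by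
      intro y _
      have h := (hdiff y).hasDerivAt.fun_pow 2
      exact h.congr_deriv (by ring)
    exact intervalIntegral.integral_eq_sub_of_hasDerivAt hd h2.intervalIntegrable
  have hIO : IntegrableOn (fun y => 2 * (u y * deriv u y)) (Iic (0:ℝ)) volume :=
    h2.integrableOn
  have hIic := intervalIntegral_tendsto_integral_Iic (0:ℝ) hIO (tendsto_id : Tendsto (fun a : ℝ => a) atBot atBot)
  set I : ℝ := ∫ y in Iic (0:ℝ), 2 * (u y * deriv u y) with hI
  have hL : Tendsto (fun a => u a ^ 2) atBot (nhds (u 0 ^ 2 - I)) := by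
    have h3 : Tendsto (fun a => u 0 ^ 2 - ∫ y in a..(0:ℝ), 2 * (u y * deriv u y)) atBot
        (nhds (u 0 ^ 2 - I)) := tendsto_const_nhds.sub hIic
    refine h3.congr (fun a => ?_)
    rw [hftc a]; ring
  have hLnonneg : 0 ≤ u 0 ^ 2 - I := le_of_tendsto_of_tendsto' tendsto_const_nhds hL
    (fun a => sq_nonneg _)
  rcases eq_or_lt_of_le hLnonneg with hL0 | hLpos
  · rwa [← hL0] at hL
  · exfalso
    set L : ℝ := u 0 ^ 2 - I with hLdef
    have hev : ∀ᶠ a in atBot, L / 2 ≤ u a ^ 2 :=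
      hL.eventually (eventually_ge_nhds (by linarith))
    obtain ⟨b, hb⟩ := (eventually_atBot).mp hev
    have hsub : Iic b ⊆ {a : ℝ | L / 2 ≤ u a ^ 2} := fun a ha => hb a ha
    have hfin : volume {a : ℝ | L / 2 ≤ u a ^ 2} < ⊤ :=
      hu2.measure_ge_lt_top (by linarith)
    have : volume (Iic b) ≤ volume {a : ℝ | L / 2 ≤ u a ^ 2} := measure_mono hsub
    rw [Real.volume_Iic] at this
    exact (lt_irrefl _ (lt_of_le_of_lt (le_trans le_top this) hfin))

lemma key_pPlus (u : ℝ → ℝ) (hdiff : Differentiable ℝ u)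
    (hu : MemLp u 2 (volume : Measure ℝ))
    (hux : MemLp (deriv u) 2 (volume : Measure ℝ)) (x : ℝ) :
    (1/4) * (u x)^2 ≤ pPlus (fun y => (u y)^2 + (1/2) * (deriv u y)^2) x := by
  have hu2 : Integrable (fun y => u y ^ 2) (volume : Measure ℝ) := hu.integrable_sq
  have hux2 : Integrable (fun y => deriv u y ^ 2) (volume : Measure ℝ) := hux.integrable_sq
  have hum : AEStronglyMeasurable u (volume : Measure ℝ) := hu.1
  have huxm : AEStronglyMeasurable (deriv u) (volume : Measure ℝ) := hux.1
  -- u * u' is integrable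
  have huu' : Integrable (fun y => u y * deriv u y) (volume : Measure ℝ) := by
    refine Integrable.mono' (((hu2.add hux2).const_mul (1/2))) (hum.mul huxm) ?_
    refine Eventually.of_forall (fun y => ?_)
    have := sq_nonneg (|u y| - |deriv u y|)
    have h1 : ‖u y * deriv u y‖ = |u y| * |deriv u y| := by
      simp [abs_mul]
    rw [h1]
    have h2 : |u y| ^ 2 = u y ^ 2 := sq_abs _
    have h3 : |deriv u y| ^ 2 = deriv u y ^ 2 := sq_abs _
    simp only [Pi.add_apply]
    nlinarith [sq_nonneg (|u y| - |deriv u y|)]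
  have h2 : Integrable (fun y => 2 * (u y * deriv u y)) (volume : Measure ℝ) :=
    huu'.const_mul 2
  have hz : Tendsto (fun a => u a ^ 2) atBot (nhds 0) :=
    sq_tendsto_zero_atBot u hdiff hu2 h2
  -- the primitive g y = exp y * u y ^ 2 with derivative g'
  set g : ℝ → ℝ := fun y => Real.exp y * u y ^ 2 with hg
  set g' : ℝ → ℝ := fun y => Real.exp y * (u y ^ 2 + 2 * (u y * deriv u y)) with hg'
  have hbase : Integrable (fun y => u y ^ 2 + 2 * (u y * deriv u y)) (volume : Measure ℝ) :=
    hu2.add h2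
  have hg'm : AEStronglyMeasurable g' (volume : Measure ℝ) :=
    (Real.continuous_exp.aestronglyMeasurable).mul hbase.1
  have hg'int : IntegrableOn g' (Iic x) volume := by
    refine Integrable.mono' ((hbase.abs.const_mul (Real.exp x)).restrict (s := Iic x))
      (hg'm.restrict) ?_
    rw [ae_restrict_iff' measurableSet_Iic]
    refine Eventually.of_forall (fun y hy => ?_)
    have h1 : ‖g' y‖ = Real.exp y * |u y ^ 2 + 2 * (u y * deriv u y)| := by
      simp [hg', abs_mul, abs_of_pos (Real.exp_pos y)]
    rw [h1]
    exact mul_le_mul_of_nonneg_right (Real.exp_le_exp.2 hy) (abs_nonneg _)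
  -- FTC on Iic x
  have hIic : ∫ y in Iic x, g' y = g x := by
    have htend := intervalIntegral_tendsto_integral_Iic x hg'int
      (tendsto_id : Tendsto (fun a : ℝ => a) atBot atBot)
    have htend2 : Tendsto (fun a : ℝ => ∫ y in a..x, g' y) atBot (nhds (g x)) := by
      have hga : Tendsto (fun a => g a) atBot (nhds 0) := by
        have := (Real.tendsto_exp_atBot).mul hz
        simpa using this
      have h4 : Tendsto (fun a => g x - g a) atBot (nhds (g x)) := by
        simpa using tendsto_const_nhds.sub hga
      refine Tendsto.congr' ?_ h4
      filter_upwards [eventually_le_atBot x] with a ha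
      have hd : ∀ y ∈ uIcc a x, HasDerivAt g (g' y) y := by
        intro y _
        have h5 : HasDerivAt (fun z => Real.exp z) (Real.exp y) y := Real.hasDerivAt_exp y
        have h6 : HasDerivAt (fun z => u z ^ 2) (2 * (u y * deriv u y)) y := by
          have h := (hdiff y).hasDerivAt.fun_pow 2
          exact h.congr_deriv (by ring)
        have := h5.fun_mul h6
        exact this.congr_deriv (by simp only [hg']; ring)
      have hii : IntervalIntegrable g' volume a x := by
        refine (hg'int.mono_set ?_).intervalIntegrable
        rw [uIcc_of_le ha]
        exact Icc_subset_Iic_self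
      rw [intervalIntegral.integral_eq_sub_of_hasDerivAt hd hii]
    exact tendsto_nhds_unique htend htend2
  -- integrand comparison
  have hFint : IntegrableOn (fun y => Real.exp y * ((u y)^2 + (1/2) * (deriv u y)^2))
      (Iic x) volume := by
    have hbase2 : Integrable (fun y => u y ^ 2 + (1/2) * (deriv u y) ^ 2) (volume : Measure ℝ) :=
      hu2.add (hux2.const_mul _)
    refine Integrable.mono' ((hbase2.abs.const_mul (Real.exp x)).restrict (s := Iic x))
      ((Real.continuous_exp.aestronglyMeasurable.mul hbase2.1).restrict) ?_
    rw [ae_restrict_iff' measurableSet_Iic]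
    refine Eventually.of_forall (fun y hy => ?_)
    have h1 : ‖Real.exp y * ((u y)^2 + (1/2) * (deriv u y)^2)‖
        = Real.exp y * |u y ^ 2 + (1/2) * (deriv u y) ^ 2| := by
      simp [abs_mul, abs_of_pos (Real.exp_pos y)]
    rw [h1]
    exact mul_le_mul_of_nonneg_right (Real.exp_le_exp.2 hy) (abs_nonneg _)
  have hmono : ∫ y in Iic x, (1/2) * g' y
      ≤ ∫ y in Iic x, Real.exp y * ((u y)^2 + (1/2) * (deriv u y)^2) := by
    refine setIntegral_mono_on (hg'int.const_mul _) hFint measurableSet_Iic ?_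
    intro y _
    simp only [hg']
    nlinarith [Real.exp_pos y, sq_nonneg (u y - deriv u y), Real.exp_pos y]
  have hhalf : ∫ y in Iic x, (1/2) * g' y = (1/2) * (Real.exp x * u x ^ 2) := by
    rw [MeasureTheory.integral_const_mul, hIic]
  -- conclude
  have hkey : (1/2) * (Real.exp x * u x ^ 2)
      ≤ ∫ y in Iic x, Real.exp y * ((u y)^2 + (1/2) * (deriv u y)^2) := by
    rw [← hhalf]; exact hmono
  unfold pPlus
  have hc : (0:ℝ) < (1/2) * Real.exp (-x) := by positivity
  calc (1/4) * (u x)^2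
      = (1/2) * Real.exp (-x) * ((1/2) * (Real.exp x * u x ^ 2)) := by
        rw [Real.exp_neg]
        field_simp
        ring
    _ ≤ (1/2) * Real.exp (-x) * ∫ y in Iic x, Real.exp y * ((u y)^2 + (1/2)*(deriv u y)^2) :=
        mul_le_mul_of_nonneg_left hkey (le_of_lt hc)

lemma key_pMinus (u : ℝ → ℝ) (hdiff : Differentiable ℝ u)
    (hu : MemLp u 2 (volume : Measure ℝ))
    (hux : MemLp (deriv u) 2 (volume : Measure ℝ)) (x : ℝ) :
    (1/4) * (u x)^2 ≤ pMinus (fun y => (u y)^2 + (1/2) * (deriv u y)^2) x := by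
  set v : ℝ → ℝ := fun y => u (-y) with hv
  have hdiffv : Differentiable ℝ v := hdiff.comp differentiable_neg
  have hderivv : ∀ y, deriv v y = -(deriv u (-y)) := by
    intro y
    have h := ((hdiff (-y)).hasDerivAt.comp y (hasDerivAt_neg y))
    have h2 : HasDerivAt v (deriv u (-y) * (-1)) y := h
    rw [h2.deriv]; ring
  have hmp := Measure.measurePreserving_neg (volume : Measure ℝ)
  have hvm : AEStronglyMeasurable v (volume : Measure ℝ) :=
    hdiffv.continuous.aestronglyMeasurable
  have hv2 : Integrable (fun y => v y ^ 2) (volume : Measure ℝ) := by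
    have : Integrable ((fun z => u z ^ 2) ∘ (fun y : ℝ => -y)) (volume : Measure ℝ) :=
      (hmp.integrable_comp hu.integrable_sq.1).2 hu.integrable_sq
    simpa [Function.comp_def] using this
  have hvx2 : Integrable (fun y => deriv v y ^ 2) (volume : Measure ℝ) := by
    have h1 : Integrable ((fun z => deriv u z ^ 2) ∘ (fun y : ℝ => -y)) (volume : Measure ℝ) :=
      (hmp.integrable_comp hux.integrable_sq.1).2 hux.integrable_sq
    refine h1.congr ?_
    refine Eventually.of_forall (fun y => ?_)
    simp [Function.comp_def, hderivv y]
  have hvmem : MemLp v 2 (volume : Measure ℝ) :=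
    (memLp_two_iff_integrable_sq hvm).2 hv2
  have hvxm : AEStronglyMeasurable (deriv v) (volume : Measure ℝ) :=
    (measurable_deriv v).aestronglyMeasurable
  have hvxmem : MemLp (deriv v) 2 (volume : Measure ℝ) :=
    (memLp_two_iff_integrable_sq hvxm).2 hvx2
  have hkey := key_pPlus v hdiffv hvmem hvxmem (-x)
  have heq : pPlus (fun y => (v y)^2 + (1/2) * (deriv v y)^2) (-x)
      = pMinus (fun y => (u y)^2 + (1/2) * (deriv u y)^2) x := by
    unfold pPlus pMinus
    rw [neg_neg]
    congr 1
    refine integral_congr_ae (Eventually.of_forall (fun y => ?_))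
    show Real.exp y * (v y ^ 2 + 1/2 * deriv v y ^ 2)
        = Real.exp y * (u (-y) ^ 2 + 1/2 * deriv u (-y) ^ 2)
    rw [hderivv y]
    ring
  rw [heq] at hkey
  simpa [hv, neg_neg] using hkey

lemma conv_split (u : ℝ → ℝ) (hdiff : Differentiable ℝ u)
    (hu : MemLp u 2 (volume : Measure ℝ))
    (hux : MemLp (deriv u) 2 (volume : Measure ℝ)) (x : ℝ) :
    conv pker (fun y => (u y)^2 + (1/2) * (deriv u y)^2) x
      = pPlus (fun y => (u y)^2 + (1/2) * (deriv u y)^2) x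
        + pMinus (fun y => (u y)^2 + (1/2) * (deriv u y)^2) x := by
  set f : ℝ → ℝ := fun y => (u y)^2 + (1/2) * (deriv u y)^2 with hfdef
  have hf : Integrable f (volume : Measure ℝ) :=
    hu.integrable_sq.add (hux.integrable_sq.const_mul _)
  have hpc : Continuous pker := by
    unfold pker
    exact continuous_const.mul (Real.continuous_exp.comp continuous_abs.neg)
  have hint : Integrable (fun y => pker (x - y) * f y) (volume : Measure ℝ) := by
    refine Integrable.mono' (hf.abs.const_mul (1/2))
      ((hpc.comp (continuous_const.sub continuous_id)).aestronglyMeasurable.mul hf.1) ?_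
    refine Eventually.of_forall (fun y => ?_)
    have hp0 : 0 < pker (x - y) := by unfold pker; positivity
    have hp1 : pker (x - y) ≤ 1/2 := by
      unfold pker
      have : Real.exp (-|x - y|) ≤ 1 := by
        rw [Real.exp_le_one_iff]
        exact neg_nonpos.2 (abs_nonneg _)
      nlinarith
    rw [norm_mul, Real.norm_eq_abs, Real.norm_eq_abs, abs_of_pos hp0]
    exact mul_le_mul_of_nonneg_right hp1 (abs_nonneg _)
  have hsplit : conv pker f x
      = (∫ y in Iic x, pker (x - y) * f y) + ∫ y in Ioi x, pker (x - y) * f y := by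
    unfold conv
    rw [← setIntegral_union (Iic_disjoint_Ioi le_rfl) measurableSet_Ioi
      hint.integrableOn hint.integrableOn, Iic_union_Ioi, setIntegral_univ]
  have hIic : ∫ y in Iic x, pker (x - y) * f y = pPlus f x := by
    unfold pPlus
    rw [← MeasureTheory.integral_const_mul]
    refine setIntegral_congr_fun measurableSet_Iic (fun y hy => ?_)
    unfold pker
    rw [abs_of_nonneg (sub_nonneg.2 hy), neg_sub, Real.exp_sub, Real.exp_neg]
    field_simp
  have hIoi : ∫ y in Ioi x, pker (x - y) * f y = pMinus f x := by
    unfold pMinus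
    have hcn : ∫ y in Iic (-x), Real.exp y * f (-y)
        = ∫ z in Ioi x, Real.exp (-z) * f z := by
      have := integral_comp_neg_Iic (-x) (fun z => Real.exp (-z) * f z)
      simpa using this
    rw [hcn, ← MeasureTheory.integral_const_mul]
    refine (setIntegral_congr_fun measurableSet_Ioi (fun y hy => ?_)).symm
    unfold pker
    have hy' : x - y < 0 := by simpa using hy
    rw [abs_of_neg hy', neg_neg, Real.exp_sub]
    rw [Real.exp_neg]
    field_simp
  rw [hsplit, hIic, hIoi]

/-- For `u ∈ H¹(ℝ)`, a.e. `x`: `p * (u² + u_x²/2)(x) ≥ u(x)²/2` and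
`p_± * (u² + u_x²/2)(x) ≥ u(x)²/4`. -/
theorem conv_lower_bounds (u : ℝ → ℝ)
    (hdiff : Differentiable ℝ u)
    (hu : MemLp u 2 (volume : Measure ℝ))
    (hux : MemLp (deriv u) 2 (volume : Measure ℝ)) :
    ∀ᵐ x : ℝ,
      (1/2) * (u x)^2 ≤ conv pker (fun y => (u y)^2 + (1/2) * (deriv u y)^2) x ∧
      (1/4) * (u x)^2 ≤ pPlus (fun y => (u y)^2 + (1/2) * (deriv u y)^2) x ∧
      (1/4) * (u x)^2 ≤ pMinus (fun y => (u y)^2 + (1/2) * (deriv u y)^2) x := by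
  refine Filter.Eventually.of_forall (fun x => ?_)
  have hP := key_pPlus u hdiff hu hux x
  have hM := key_pMinus u hdiff hu hux x
  have hC := conv_split u hdiff hu hux x
  refine ⟨?_, hP, hM⟩
  rw [hC]
  linarith
end

section
/- Suppose y : [0,t₀) → ℝ satisfies 1/y(t) ≤ C₃(t − t₋)(t − t₊) with y > 0, where 0 < t₋ < t₊ are the roots of t² − (C₀/C₃)t + 1/(C₃ m₀) = 0, C₀, C₃, m₀ > 0 and (C₀/C₃)² > 2/(C₃ m₀). Then y(t) → +∞ as t approaches some time T* ≤ t₋. -/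
open Real Filter

/-- If `y > 0` satisfies `1/y(t) ≤ C₃(t - t₋)(t - t₊)` on `[0, t₀)` where `t₋ < t₊` are the
roots of `t² - (C₀/C₃)t + 1/(C₃m₀) = 0` (with `(C₀/C₃)² > 2/(C₃m₀)`), then `y` blows up:
`y(t) → +∞` as `t` approaches some time `T* ≤ t₋`. -/
theorem quadratic_bound_blowup (C₀ C₃ m₀ t₀ tm tp : ℝ)
    (hC₀ : 0 < C₀) (hC₃ : 0 < C₃) (hm₀ : 0 < m₀)
    (hdisc : 2/(C₃*m₀) < (C₀/C₃)^2)
    (htm : tm = C₀/(2*C₃) - (1/2) * Real.sqrt ((C₀/C₃)^2 - 2/(C₃*m₀)))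
    (htp : tp = C₀/(2*C₃) + (1/2) * Real.sqrt ((C₀/C₃)^2 - 2/(C₃*m₀)))
    (ht₀ : tm ≤ t₀)
    (y : ℝ → ℝ)
    (hy : ∀ t ∈ Set.Ico (0:ℝ) t₀, 0 < y t ∧ 1/(y t) ≤ C₃ * (t - tm) * (t - tp)) :
    ∃ T : ℝ, T ≤ tm ∧ Tendsto y (nhdsWithin T (Set.Iio T)) atTop := by
  have hd : 0 < (C₀/C₃)^2 - 2/(C₃*m₀) := by linarith
  have hsq : 0 < Real.sqrt ((C₀/C₃)^2 - 2/(C₃*m₀)) := Real.sqrt_pos.mpr hd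
  have hsqlt : Real.sqrt ((C₀/C₃)^2 - 2/(C₃*m₀)) < C₀/C₃ := by
    have h2 : 0 < 2/(C₃*m₀) := by positivity
    have := Real.sqrt_lt_sqrt (by linarith) (show (C₀/C₃)^2 - 2/(C₃*m₀) < (C₀/C₃)^2 by linarith)
    rwa [Real.sqrt_sq (by positivity : (0:ℝ) ≤ C₀/C₃)] at this
  have htm0 : 0 < tm := by
    rw [htm]
    have : C₀/(2*C₃) = (C₀/C₃)/2 := by ring
    rw [this]; linarith
  have htmtp : tm < tp := by rw [htm, htp]; linarith
  refine ⟨tm, le_refl _, ?_⟩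
  -- lower bound function
  set B : ℝ → ℝ := fun t => C₃ * (t - tm) * (t - tp) with hB
  have hBpos : ∀ t < tm, 0 < B t := by
    intro t ht
    have h1 : t - tm < 0 := by linarith
    have h2 : t - tp < 0 := by linarith
    have : 0 < (t - tm) * (t - tp) := mul_pos_of_neg_of_neg h1 h2
    simpa [hB, mul_assoc] using mul_pos hC₃ this
  have hBtend : Tendsto B (nhdsWithin tm (Set.Iio tm)) (nhdsWithin 0 (Set.Ioi 0)) := by
    rw [tendsto_nhdsWithin_iff]
    constructor
    · have : Tendsto B (nhds tm) (nhds (C₃ * (tm - tm) * (tm - tp))) := by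
        apply Continuous.tendsto
        continuity
      have h0 : C₃ * (tm - tm) * (tm - tp) = 0 := by ring
      rw [h0] at this
      exact this.mono_left nhdsWithin_le_nhds
    · filter_upwards [self_mem_nhdsWithin] with t ht
      exact hBpos t ht
  have hinv : Tendsto (fun t => (B t)⁻¹) (nhdsWithin tm (Set.Iio tm)) atTop :=
    hBtend.inv_tendsto_nhdsGT_zero
  apply tendsto_atTop_mono' _ _ hinv
  have hmem : Set.Ioo (0:ℝ) tm ∈ nhdsWithin tm (Set.Iio tm) :=
    Ioo_mem_nhdsLT_of_mem (by constructor <;> [exact htm0; exact le_refl tm])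
  filter_upwards [hmem] with t ht
  have hIco : t ∈ Set.Ico (0:ℝ) t₀ := ⟨le_of_lt ht.1, lt_of_lt_of_le ht.2 ht₀⟩
  obtain ⟨hy0, hyB⟩ := hy t hIco
  have hBt : 0 < B t := hBpos t ht.2
  rw [one_div] at hyB
  calc (B t)⁻¹ ≤ ((y t)⁻¹)⁻¹ := by
        apply inv_anti₀ (by positivity) hyB
    _ = y t := inv_inv _
end
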